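/- Let N ≥ 1 be an integer, let 0 < L ≤ U be reals with κ = U/L, and let x ∈ ℝ^N satisfy L ≤ x_i ≤ U for all i. Then for all nonzero reals p < q ≤ 1, the log of the generalized p-mean is (κ·ln κ)-Lipschitz from p to q: ln f(x, q) − ln f(x, p) ≤ (q − p)·κ·ln κ, equivalently f(x, q) ≤ f(x, p)·exp((q − p)·κ·ln κ). -/

import Mathlib

open Real BigOperators Finset

/-- Generalized `p`-mean of a vector `x ∈ ℝ^N` for nonzero real exponent `p`. -/
noncomputable def pmean {N : ℕ} (x : Fin N → ℝ) (p : ℝ) : ℝ :=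
  ((1 / N : ℝ) * ∑ i, x i ^ p) ^ (1 / p)


lemma aux_convex {N : ℕ} (hN : 1 ≤ N) (y : Fin N → ℝ) (c d : ℝ)
    (hy : ∀ i, (y i - c) ^ 2 ≤ d ^ 2) :
    ConvexOn ℝ Set.univ
      (fun s : ℝ => d ^ 2 / 2 * s ^ 2 - Real.log ((1 / N : ℝ) * ∑ i, Real.exp (y i * s))) := by
  have hNe : Nonempty (Fin N) := ⟨⟨0, hN⟩⟩
  set A : ℝ → ℝ := fun s => ∑ i, Real.exp (y i * s) with hA_def
  set B : ℝ → ℝ := fun s => ∑ i, Real.exp (y i * s) * y i with hB_def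
  set C : ℝ → ℝ := fun s => ∑ i, Real.exp (y i * s) * y i * y i with hC_def
  have hApos : ∀ s, 0 < A s := fun s =>
    Finset.sum_pos (fun i _ => Real.exp_pos _) Finset.univ_nonempty
  have hNpos : (0:ℝ) < (1/N : ℝ) := by positivity
  have hA : ∀ s, HasDerivAt A (B s) s := by
    intro s
    apply HasDerivAt.fun_sum
    intro i _
    have h1 : HasDerivAt (fun s : ℝ => y i * s) (y i) s := by
      simpa using (hasDerivAt_id s).const_mul (y i)
    simpa [mul_comm] using h1.exp
  have hB : ∀ s, HasDerivAt B (C s) s := by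
    intro s
    apply HasDerivAt.fun_sum
    intro i _
    have h1 : HasDerivAt (fun s : ℝ => y i * s) (y i) s := by
      simpa using (hasDerivAt_id s).const_mul (y i)
    simpa [mul_comm, mul_assoc, mul_left_comm] using h1.exp.mul_const (y i)
  have hG : ∀ s, HasDerivAt (fun s => (1/N : ℝ) * A s) ((1/N : ℝ) * B s) s :=
    fun s => (hA s).const_mul _
  have hGpos : ∀ s, 0 < (1/N : ℝ) * A s := fun s => mul_pos hNpos (hApos s)
  have hlog : ∀ s, HasDerivAt (fun s => Real.log ((1/N : ℝ) * A s)) (B s / A s) s := by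
    intro s
    have := (hG s).log (hGpos s).ne'
    convert this using 1
    field_simp
  set f' : ℝ → ℝ := fun s => d ^ 2 * s - B s / A s with hf'_def
  have hf' : ∀ s, HasDerivAt (fun s : ℝ => d ^ 2 / 2 * s ^ 2 - Real.log ((1/N : ℝ) * A s)) (f' s) s := by
    intro s
    have h1 : HasDerivAt (fun s : ℝ => d ^ 2 / 2 * s ^ 2) (d ^ 2 * s) s := by
      have := (hasDerivAt_pow 2 s).const_mul (d ^ 2 / 2)
      exact this.congr_deriv (by rw [show (2:ℕ) - 1 = 1 from rfl]; push_cast; ring)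
    exact h1.sub (hlog s)
  set f'' : ℝ → ℝ := fun s => d ^ 2 - (C s * A s - B s * B s) / (A s) ^ 2 with hf''_def
  have hf'' : ∀ s, HasDerivAt f' (f'' s) s := by
    intro s
    have h1 : HasDerivAt (fun s : ℝ => d ^ 2 * s) (d ^ 2) s := by
      simpa using (hasDerivAt_id s).const_mul (d ^ 2)
    exact h1.sub ((hB s).div (hA s) (hApos s).ne')
  have hnonneg : ∀ s, 0 ≤ f'' s := by
    intro s
    have hCc : ∀ i, Real.exp (y i * s) * (y i - c) ^ 2
        = Real.exp (y i * s) * y i * y i - 2 * c * (Real.exp (y i * s) * y i)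
          + c ^ 2 * Real.exp (y i * s) := fun i => by ring
    have hCceq : (∑ i, Real.exp (y i * s) * (y i - c) ^ 2)
        = C s - 2 * c * B s + c ^ 2 * A s := by
      rw [Finset.sum_congr rfl (fun i _ => hCc i)]
      simp [hA_def, hB_def, hC_def, Finset.sum_add_distrib, Finset.sum_sub_distrib,
        Finset.mul_sum]
    have hCcle : (∑ i, Real.exp (y i * s) * (y i - c) ^ 2) ≤ d ^ 2 * A s := by
      rw [hA_def, Finset.mul_sum]
      apply Finset.sum_le_sum
      intro i _
      rw [mul_comm (d ^ 2) _]
      exact mul_le_mul_of_nonneg_left (hy i) (Real.exp_pos _).le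
    have key : C s * A s - B s * B s ≤ d ^ 2 * (A s) ^ 2 := by
      nlinarith [sq_nonneg (B s - c * A s), mul_le_mul_of_nonneg_right
        (hCceq ▸ hCcle) (hApos s).le, hApos s]
    have : (C s * A s - B s * B s) / (A s) ^ 2 ≤ d ^ 2 := by
      rw [div_le_iff₀ (by positivity)]
      linarith [key]
    simp only [hf''_def]
    linarith
  apply convexOn_of_hasDerivWithinAt2_nonneg (f' := f') (f'' := f'') convex_univ
  · exact fun s _ => ((hf' s).continuousAt).continuousWithinAt
  · intro s _
    exact (hf' s).hasDerivWithinAt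
  · intro s _
    exact (hf'' s).hasDerivWithinAt
  · intro s _
    exact hnonneg s

/-- The log of the generalized `p`-mean is `(κ·ln κ)`-Lipschitz in the exponent:
for entries in `[L, U]` with `0 < L ≤ U` and `κ = U/L`, and nonzero `p < q ≤ 1`,
`ln f(x, q) − ln f(x, p) ≤ (q − p)·κ·ln κ`. -/
theorem log_pmean_lipschitz {N : ℕ} (hN : 1 ≤ N) (L U : ℝ) (hL : 0 < L)
    (hLU : L ≤ U) (κ : ℝ) (hκ : κ = U / L) (x : Fin N → ℝ)
    (hx : ∀ i, x i ∈ Set.Icc L U)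
    (p q : ℝ) (hp : p ≠ 0) (hq : q ≠ 0) (hpq : p < q) (hq1 : q ≤ 1) :
    Real.log (pmean x q) - Real.log (pmean x p) ≤ (q - p) * (κ * Real.log κ) := by
  have hNe : Nonempty (Fin N) := ⟨⟨0, hN⟩⟩
  have hU : 0 < U := lt_of_lt_of_le hL hLU
  have hxpos : ∀ i, 0 < x i := fun i => lt_of_lt_of_le hL (hx i).1
  set y : Fin N → ℝ := fun i => Real.log (x i) with hy_def
  set c : ℝ := (Real.log L + Real.log U) / 2 with hc_def
  set d : ℝ := (Real.log U - Real.log L) / 2 with hd_def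
  have hyb : ∀ i, (y i - c) ^ 2 ≤ d ^ 2 := by
    intro i
    have h1 : Real.log L ≤ y i := Real.log_le_log hL (hx i).1
    have h2 : y i ≤ Real.log U := Real.log_le_log (hxpos i) (hx i).2
    apply sq_le_sq' <;> simp only [hc_def, hd_def] <;> linarith
  have hconv := aux_convex hN y c d hyb
  set f : ℝ → ℝ :=
    fun s : ℝ => d ^ 2 / 2 * s ^ 2 - Real.log ((1 / N : ℝ) * ∑ i, Real.exp (y i * s)) with hf_def
  -- value at 0
  have hNpos : (0:ℝ) < (N : ℝ) := by exact_mod_cast hN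
  have hf0 : f 0 = 0 := by
    simp only [hf_def, mul_zero, Real.exp_zero, Finset.sum_const, Finset.card_univ,
      Fintype.card_fin, nsmul_eq_mul, mul_one, ne_eq]
    rw [one_div, inv_mul_cancel₀ hNpos.ne', Real.log_one]
    ring
  -- relate f to log pmean
  have hsum : ∀ s : ℝ, (∑ i, x i ^ s) = ∑ i, Real.exp (y i * s) := by
    intro s
    exact Finset.sum_congr rfl fun i _ => Real.rpow_def_of_pos (hxpos i) s
  have hSpos : ∀ s : ℝ, 0 < (1 / N : ℝ) * ∑ i, x i ^ s := by
    intro s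
    apply mul_pos (by positivity)
    exact Finset.sum_pos (fun i _ => Real.rpow_pos_of_pos (hxpos i) s) Finset.univ_nonempty
  have hlogpmean : ∀ s : ℝ, Real.log (pmean x s)
      = (1 / s) * Real.log ((1 / N : ℝ) * ∑ i, x i ^ s) := by
    intro s
    rw [pmean, Real.log_rpow (hSpos s)]
  have hfp : ∀ s : ℝ, f s = d ^ 2 / 2 * s ^ 2
      - Real.log ((1 / N : ℝ) * ∑ i, x i ^ s) := by
    intro s
    rw [hf_def]
    simp only [hsum s]
  -- secant monotonicity
  have hsec := hconv.secant_mono (a := 0) (x := p) (y := q) (Set.mem_univ 0)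
    (Set.mem_univ p) (Set.mem_univ q) hp hq hpq.le
  rw [hf0] at hsec
  simp only [sub_zero] at hsec
  have hfpP := hfp p
  have hfqQ := hfp q
  have hlp := hlogpmean p
  have hlq := hlogpmean q
  -- turn secant inequality into the log inequality
  have key : Real.log (pmean x q) - Real.log (pmean x p) ≤ (q - p) * (d ^ 2 / 2) := by
    have hsec' : f p / p ≤ f q / q := hsec
    rw [hfpP] at hsec'
    rw [hfqQ] at hsec'
    rw [hlp, hlq]
    have hp2 : d ^ 2 / 2 * p ^ 2 / p = d ^ 2 / 2 * p := by
      field_simp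
    have hq2 : d ^ 2 / 2 * q ^ 2 / q = d ^ 2 / 2 * q := by
      field_simp
    rw [sub_div, sub_div, hp2, hq2] at hsec'
    have e1 : Real.log ((1 / N : ℝ) * ∑ i, x i ^ p) / p
        = (1 / p) * Real.log ((1 / N : ℝ) * ∑ i, x i ^ p) := by ring
    have e2 : Real.log ((1 / N : ℝ) * ∑ i, x i ^ q) / q
        = (1 / q) * Real.log ((1 / N : ℝ) * ∑ i, x i ^ q) := by ring
    rw [e1, e2] at hsec'
    linarith
  refine le_trans key ?_
  -- numeric: d^2/2 ≤ κ log κ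
  have hκ1 : 1 ≤ κ := by rw [hκ]; exact (one_le_div hL).mpr hLU
  have hlogκ : Real.log κ = 2 * d := by
    rw [hκ, Real.log_div hU.ne' hL.ne', hd_def]; ring
  have hd0 : 0 ≤ d := by
    have := Real.log_nonneg hκ1
    rw [hlogκ] at this; linarith
  have hlogle : Real.log κ ≤ κ - 1 := Real.log_le_sub_one_of_pos (by linarith)
  apply mul_le_mul_of_nonneg_left _ (by linarith : (0:ℝ) ≤ q - p)
  rw [hlogκ] at hlogle ⊢
  nlinarith [hd0, hκ1]
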